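/- Let M₁ and M₂ be right R-modules. If M = M₁ ⊕ M₂ is pseudo-projective, then M₁ is M₂-projective and M₂ is M₁-projective. -/

import Mathlib

open LinearMap Submodule

/-- A submodule N of M is small (superfluous) in M:
N + K = M implies K = M for every submodule K. -/
def IsSmall {R : Type*} [Ring R] {M : Type*} [AddCommGroup M] [Module R M]
    (N : Submodule R M) : Prop :=
  ∀ K : Submodule R M, N ⊔ K = ⊤ → K = ⊤

/-- M is a dual automorphism-invariant R-module: for any two small submodules
K₁, K₂ of M, every surjective homomorphism η : M/K₁ → M/K₂ whose kernel is
small in M/K₁ lifts to an endomorphism φ of M (i.e. π₂ ∘ φ = η ∘ π₁). -/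
def IsDualAutoInv (R M : Type*) [Ring R] [AddCommGroup M] [Module R M] : Prop :=
  ∀ (K₁ K₂ : Submodule R M), IsSmall K₁ → IsSmall K₂ →
    ∀ η : (M ⧸ K₁) →ₗ[R] (M ⧸ K₂), Function.Surjective η →
      IsSmall (LinearMap.ker η) →
      ∃ φ : M →ₗ[R] M, K₂.mkQ ∘ₗ φ = η ∘ₗ K₁.mkQ

/-- M is pseudo-projective: every surjective homomorphism M → M/N lifts to an
endomorphism of M. -/
def IsPseudoProjective (R M : Type*) [Ring R] [AddCommGroup M] [Module R M] : Prop :=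
  ∀ (N : Submodule R M) (φ : M →ₗ[R] M ⧸ N), Function.Surjective φ →
    ∃ ψ : M →ₗ[R] M, N.mkQ ∘ₗ ψ = φ

/-- A is B-projective: every homomorphism A → B/N lifts to a homomorphism A → B. -/
def IsRelProjective (R A B : Type*) [Ring R] [AddCommGroup A] [Module R A]
    [AddCommGroup B] [Module R B] : Prop :=
  ∀ (N : Submodule R B) (f : A →ₗ[R] B ⧸ N), ∃ g : A →ₗ[R] B, N.mkQ ∘ₗ g = f

lemma pseudo_transfer {R : Type*} [Ring R] {M M' : Type*} [AddCommGroup M] [Module R M]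
    [AddCommGroup M'] [Module R M'] (e : M ≃ₗ[R] M')
    (h : IsPseudoProjective R M) : IsPseudoProjective R M' := by
  intro N φ hφ
  have hmap : (N.comap (e : M →ₗ[R] M')).map (e : M →ₗ[R] M') = N := by
    rw [Submodule.map_comap_eq]
    simp [LinearMap.range_eq_top.mpr e.surjective]
  let q : (M ⧸ N.comap (e : M →ₗ[R] M')) ≃ₗ[R] (M' ⧸ N) :=
    Submodule.Quotient.equiv _ N e hmap
  have hq : ∀ x : M, q ((N.comap (e : M →ₗ[R] M')).mkQ x) = N.mkQ (e x) := by
    intro x; rfl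
  let φ₀ : M →ₗ[R] M ⧸ N.comap (e : M →ₗ[R] M') :=
    (q.symm : (M' ⧸ N) →ₗ[R] _) ∘ₗ φ ∘ₗ (e : M →ₗ[R] M')
  have hφ₀ : Function.Surjective φ₀ := by
    intro c
    obtain ⟨x, hx⟩ := hφ (q c)
    obtain ⟨y, hy⟩ := e.surjective x
    exact ⟨y, by simp [φ₀, hy, hx]⟩
  obtain ⟨ψ₀, hψ₀⟩ := h _ φ₀ hφ₀
  refine ⟨(e : M →ₗ[R] M') ∘ₗ ψ₀ ∘ₗ (e.symm : M' →ₗ[R] M), ?_⟩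
  ext x
  have := congrArg (fun t => q (t (e.symm x))) hψ₀
  simp only [LinearMap.comp_apply] at this ⊢
  simpa [φ₀, show ∀ y : M, q (Submodule.Quotient.mk y) = Submodule.Quotient.mk (e y) from hq] using this

lemma aux_rel {R : Type*} [Ring R] {A B : Type*} [AddCommGroup A] [Module R A]
    [AddCommGroup B] [Module R B] (h : IsPseudoProjective R (A × B)) :
    IsRelProjective R A B := by
  intro N f
  set K : Submodule R (A × B) := (⊥ : Submodule R A).prod N with hKdef
  have hinr : N ≤ ker (K.mkQ ∘ₗ inr R A B) := by
    intro y hy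
    simp only [mem_ker, LinearMap.comp_apply, inr_apply, Submodule.mkQ_apply,
      Submodule.Quotient.mk_eq_zero]
    exact ⟨Submodule.zero_mem _, hy⟩
  let j : (A × (B ⧸ N)) →ₗ[R] (A × B) ⧸ K :=
    (K.mkQ ∘ₗ inl R A B).coprod (N.liftQ (K.mkQ ∘ₗ inr R A B) hinr)
  have hj : ∀ (a : A) (b : B), j (a, N.mkQ b) = K.mkQ (a, b) := by
    intro a b
    simp only [j, coprod_apply, LinearMap.comp_apply, inl_apply, Submodule.mkQ_apply,
      Submodule.liftQ_apply, inr_apply]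
    rw [← Submodule.mkQ_apply, ← Submodule.mkQ_apply, ← map_add]
    norm_num
  let q : (A × B) →ₗ[R] A × (B ⧸ N) :=
    (LinearMap.fst R A B).prod ((f ∘ₗ LinearMap.fst R A B) + (N.mkQ ∘ₗ LinearMap.snd R A B))
  have hqapp : ∀ m : A × B, q m = (m.1, f m.1 + N.mkQ m.2) := by intro m; simp [q, LinearMap.prod_apply]
  let φ : (A × B) →ₗ[R] (A × B) ⧸ K := j ∘ₗ q
  have hφ : Function.Surjective φ := by
    intro c
    obtain ⟨⟨a, b⟩, rfl⟩ := K.mkQ_surjective c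
    obtain ⟨b', hb'⟩ := N.mkQ_surjective (N.mkQ b - f a)
    refine ⟨(a, b'), ?_⟩
    simp only [φ, LinearMap.comp_apply, hqapp, hb']
    rw [show f a + (N.mkQ b - f a) = N.mkQ b by abel, hj]
  obtain ⟨ψ, hψ⟩ := h K φ hφ
  let p : (A × B) →ₗ[R] A × (B ⧸ N) := (LinearMap.fst R A B).prod (N.mkQ ∘ₗ LinearMap.snd R A B)
  have hpapp : ∀ m : A × B, p m = (m.1, N.mkQ m.2) := by intro m; simp [p, LinearMap.prod_apply]
  have hKp : K ≤ ker p := by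
    rintro ⟨x, y⟩ ⟨hx, hy⟩
    obtain rfl : x = 0 := by simpa using hx
    rw [mem_ker, hpapp]
    simp only [Submodule.mkQ_apply, (Submodule.Quotient.mk_eq_zero N).mpr hy]
    rfl
  let e : ((A × B) ⧸ K) →ₗ[R] A × (B ⧸ N) := K.liftQ p hKp
  have he : ∀ m : A × B, e (K.mkQ m) = p m := fun m => rfl
  refine ⟨LinearMap.snd R A B ∘ₗ ψ ∘ₗ inl R A B, ?_⟩
  ext x
  have h1 : K.mkQ (ψ (x, 0)) = φ (x, 0) := congrFun (congrArg (·.toFun) hψ) (x, 0)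
  have h2 : e (K.mkQ (ψ (x, 0))) = e (φ (x, 0)) := congrArg e h1
  rw [he] at h2
  have h3 : e (φ (x, 0)) = (x, f x) := by
    simp only [φ, LinearMap.comp_apply, hqapp]
    have : f x + N.mkQ (0 : B) = N.mkQ 0 + f x := by simp
    rw [show (f x + N.mkQ (0:B)) = f x by simp]
    obtain ⟨b', hb'⟩ := N.mkQ_surjective (f x)
    rw [← hb', hj, he, hpapp, hb']
  rw [h3, hpapp] at h2
  have := congrArg Prod.snd h2
  simpa using this

/-- If M₁ ⊕ M₂ is pseudo-projective then M₁ is M₂-projective and M₂ is M₁-projective. -/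
theorem pseudoProjective_prod_relProjective
    {R : Type*} [Ring R] {M₁ M₂ : Type*} [AddCommGroup M₁] [Module R M₁]
    [AddCommGroup M₂] [Module R M₂] (h : IsPseudoProjective R (M₁ × M₂)) :
    IsRelProjective R M₁ M₂ ∧ IsRelProjective R M₂ M₁ :=
  ⟨aux_rel h, aux_rel (pseudo_transfer (LinearEquiv.prodComm R M₁ M₂) h)⟩
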